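/- Let d ≥ 1, let A be an invertible d×d real matrix and b ∈ ℝ^d, and define ρ_{A,b}(x) = π^{−d/2}·|det A|^{−1}·exp(−|A^{−1}(x − b)|²) for x ∈ ℝ^d. Then the total potential energy of the quantum harmonic oscillator at ρ_{A,b} satisfies ∫_{ℝ^d} (|x|²/2)·ρ_{A,b}(x) dx + (1/8)·∫_{ℝ^d} |∇ log ρ_{A,b}(x)|²·ρ_{A,b}(x) dx = (1/4)·Tr(AᵀA + (A·Aᵀ)^{−1}) + (1/2)·bᵀb. -/

import Mathlib

open Matrix MeasureTheory
open scoped BigOperators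
open Real Set Filter

lemma g_integrable : Integrable (fun x : ℝ => Real.exp (-x ^ 2)) := by
  simpa using integrable_exp_neg_mul_sq one_pos

lemma g1_integrable : Integrable (fun x : ℝ => x * Real.exp (-x ^ 2)) := by
  simpa using integrable_mul_exp_neg_mul_sq one_pos

lemma g2_integrable : Integrable (fun x : ℝ => x ^ 2 * Real.exp (-x ^ 2)) := by
  have := integrable_rpow_mul_exp_neg_mul_sq one_pos (s := 2) (by norm_num)
  simpa [Real.rpow_natCast _ 2] using this

lemma g_int : ∫ x : ℝ, Real.exp (-x ^ 2) = Real.sqrt π := by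
  simpa using integral_gaussian 1

lemma g_int_Ioi : ∫ x : ℝ in Ioi (0:ℝ), Real.exp (-x ^ 2) = Real.sqrt π / 2 := by
  have h := integral_comp_abs (f := fun t : ℝ => Real.exp (-t ^ 2))
  simp only [sq_abs] at h
  rw [g_int] at h
  linarith

lemma g1_int : ∫ x : ℝ, x * Real.exp (-x ^ 2) = 0 := by
  have h := integral_neg_eq_self (fun x : ℝ => x * Real.exp (-x ^ 2)) volume
  simp only [neg_sq, neg_mul] at h
  rw [integral_neg] at h
  linarith [h]

lemma g2_int : ∫ x : ℝ, x ^ 2 * Real.exp (-x ^ 2) = Real.sqrt π / 2 := by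
  have habs := integral_comp_abs (f := fun t : ℝ => t ^ 2 * Real.exp (-t ^ 2))
  simp only [sq_abs] at habs
  have key : ∫ x : ℝ in Ioi (0:ℝ),
      (x ^ 2 * Real.exp (-x ^ 2) - (1/2) * Real.exp (-x ^ 2)) = 0 - (-(0/2) * Real.exp (-(0:ℝ) ^ 2)) := by
    apply integral_Ioi_of_hasDerivAt_of_tendsto' (f := fun x : ℝ => -(x/2) * Real.exp (-x ^ 2))
    · intro x hx
      have h1 : HasDerivAt (fun x : ℝ => -(x/2)) (-(1/2)) x := by
        exact ((hasDerivAt_id x).div_const 2).neg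
      have h2 : HasDerivAt (fun x : ℝ => Real.exp (-x ^ 2)) (Real.exp (-x ^ 2) * (-(2 * x))) x := by
        simpa using ((hasDerivAt_pow 2 x).neg).exp
      have := h1.mul h2
      exact this.congr_deriv (by ring)
    · apply Integrable.integrableOn
      apply g2_integrable.sub (g_integrable.const_mul _)
    · have hexp : Tendsto (fun x : ℝ => Real.exp (-(1/2) * x)) atTop (nhds 0) := by
        have := tendsto_exp_neg_atTop_nhds_zero.comp
          (tendsto_id.const_mul_atTop (show (0:ℝ) < 1/2 by norm_num))
        exact this.congr (fun x => by simp only [Function.comp_apply, id_eq]; ring_nf)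
      have h := (rpow_mul_exp_neg_mul_sq_isLittleO_exp_neg one_pos 1).tendsto_zero_of_tendsto hexp
      have h' : Tendsto (fun x : ℝ => x * Real.exp (-x ^ 2)) atTop (nhds 0) := by
        refine h.congr' ?_
        filter_upwards [eventually_gt_atTop (0:ℝ)] with x hx
        rw [Real.rpow_one]
        ring_nf
      have := h'.const_mul (-(1/2) : ℝ)
      simpa using this.congr (fun x => by ring)
  have hsub : ∫ x : ℝ in Ioi (0:ℝ), (x ^ 2 * Real.exp (-x ^ 2) - (1/2) * Real.exp (-x ^ 2))
      = (∫ x : ℝ in Ioi (0:ℝ), x ^ 2 * Real.exp (-x ^ 2)) - ∫ x : ℝ in Ioi (0:ℝ), (1/2) * Real.exp (-x ^ 2) := by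
    apply integral_sub (g2_integrable.integrableOn) ((g_integrable.const_mul _).integrableOn)
  rw [hsub] at key
  rw [integral_const_mul, g_int_Ioi] at key
  have : ∫ x : ℝ in Ioi (0:ℝ), x ^ 2 * Real.exp (-x ^ 2) = Real.sqrt π / 4 := by
    simp at key; linarith
  rw [habs, this]; ring

section Multi
open Finset
variable {d : ℕ}

lemma E_prod (y : Fin d → ℝ) :
    Real.exp (-∑ i, y i ^ 2) = ∏ i, Real.exp (-(y i) ^ 2) := by
  rw [← Real.exp_sum]
  congr 1
  rw [← Finset.sum_neg_distrib]

lemma P0 : ∫ y : Fin d → ℝ, Real.exp (-∑ i, y i ^ 2) = (Real.sqrt π) ^ d := by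
  calc ∫ y : Fin d → ℝ, Real.exp (-∑ i, y i ^ 2)
      = ∫ y : Fin d → ℝ, ∏ i, Real.exp (-(y i) ^ 2) := by
        congr 1; funext y; exact E_prod y
    _ = (∫ x : ℝ, Real.exp (-x ^ 2)) ^ (Fintype.card (Fin d)) :=
        MeasureTheory.integral_fintype_prod_eq_pow (fun x : ℝ => Real.exp (-x ^ 2))
    _ = (Real.sqrt π) ^ d := by rw [g_int, Fintype.card_fin]

lemma Int0 : Integrable (fun y : Fin d → ℝ => Real.exp (-∑ i, y i ^ 2)) := by
  have : Integrable (fun y : Fin d → ℝ => ∏ i, Real.exp (-(y i) ^ 2)) :=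
    Integrable.fintype_prod (f := fun _ : Fin d => fun x : ℝ => Real.exp (-x ^ 2))
      (fun _ => g_integrable)
  exact this.congr (Filter.Eventually.of_forall fun y => (E_prod y).symm)

lemma prod_single_eq (j : Fin d) (y : Fin d → ℝ) :
    (∏ i, (if i = j then y i else 1)) = y j := by
  rw [Finset.prod_ite_eq' Finset.univ j (fun i => y i)]
  simp

lemma Int1 (j : Fin d) : Integrable (fun y : Fin d → ℝ => y j * Real.exp (-∑ i, y i ^ 2)) := by
  have : Integrable (fun y : Fin d → ℝ =>
      ∏ i, ((if i = j then y i else 1) * Real.exp (-(y i) ^ 2))) := by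
    apply Integrable.fintype_prod (f := fun i : Fin d => fun x : ℝ =>
      (if i = j then x else 1) * Real.exp (-x ^ 2))
    intro i
    by_cases h : i = j <;> simp [h]
    · exact g1_integrable
    · exact g_integrable
  apply this.congr (Filter.Eventually.of_forall fun y => ?_)
  dsimp only
  rw [Finset.prod_mul_distrib, prod_single_eq, ← E_prod]

lemma Int2 (j k : Fin d) :
    Integrable (fun y : Fin d → ℝ => y j * y k * Real.exp (-∑ i, y i ^ 2)) := by
  have : Integrable (fun y : Fin d → ℝ =>
      ∏ i, ((if i = j then y i else 1) * ((if i = k then y i else 1) * Real.exp (-(y i) ^ 2)))) := by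
    apply Integrable.fintype_prod (f := fun i : Fin d => fun x : ℝ =>
      (if i = j then x else 1) * ((if i = k then x else 1) * Real.exp (-x ^ 2)))
    intro i
    by_cases h : i = j
    · by_cases h' : i = k
      · simp only [if_pos h, if_pos h']
        exact g2_integrable.congr (Filter.Eventually.of_forall fun x => by ring)
      · simp only [if_pos h, if_neg h', one_mul]
        exact g1_integrable
    · by_cases h' : i = k
      · simp only [if_neg h, if_pos h', one_mul]
        exact g1_integrable
      · simp only [if_neg h, if_neg h', one_mul]
        exact g_integrable
  apply this.congr (Filter.Eventually.of_forall fun y => ?_)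
  dsimp only
  simp_rw [Finset.prod_mul_distrib, prod_single_eq, ← E_prod]
  ring

lemma P1 (j : Fin d) : ∫ y : Fin d → ℝ, y j * Real.exp (-∑ i, y i ^ 2) = 0 := by
  have : ∫ y : Fin d → ℝ, y j * Real.exp (-∑ i, y i ^ 2)
      = ∫ y : Fin d → ℝ, ∏ i, ((if i = j then y i else 1) * Real.exp (-(y i) ^ 2)) := by
    congr 1; funext y
    rw [Finset.prod_mul_distrib, prod_single_eq, ← E_prod]
  rw [this, MeasureTheory.volume_pi, MeasureTheory.integral_fintype_prod_eq_prod
    (f := fun i : Fin d => fun x : ℝ => (if i = j then x else 1) * Real.exp (-x ^ 2))]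
  apply Finset.prod_eq_zero (Finset.mem_univ j)
  simp [g1_int]

lemma P2 (j k : Fin d) :
    ∫ y : Fin d → ℝ, y j * y k * Real.exp (-∑ i, y i ^ 2)
      = if j = k then (Real.sqrt π) ^ d / 2 else 0 := by
  have : ∫ y : Fin d → ℝ, y j * y k * Real.exp (-∑ i, y i ^ 2)
      = ∫ y : Fin d → ℝ,
        ∏ i, ((if i = j then y i else 1) * ((if i = k then y i else 1) * Real.exp (-(y i) ^ 2))) := by
    congr 1; funext y
    simp_rw [Finset.prod_mul_distrib, prod_single_eq, ← E_prod]
    ring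
  rw [this, MeasureTheory.volume_pi, MeasureTheory.integral_fintype_prod_eq_prod
    (f := fun i : Fin d => fun x : ℝ =>
      (if i = j then x else 1) * ((if i = k then x else 1) * Real.exp (-x ^ 2)))]
  by_cases hjk : j = k
  · subst hjk
    rw [← Finset.mul_prod_erase Finset.univ _ (Finset.mem_univ j)]
    have hj : ∫ x : ℝ, (if j = j then x else 1) * ((if j = j then x else 1) * Real.exp (-x ^ 2))
        = Real.sqrt π / 2 := by
      simp only [eq_self_iff_true, if_true]
      rw [← g2_int]
      congr 1; funext x; ring
    have hrest : ∀ i ∈ Finset.univ.erase j,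
        (∫ x : ℝ, (if i = j then x else 1) * ((if i = j then x else 1) * Real.exp (-x ^ 2)))
          = Real.sqrt π := by
      intro i hi
      simp only [if_neg (Finset.mem_erase.1 hi).1, one_mul]
      exact g_int
    rw [hj, Finset.prod_congr rfl hrest, Finset.prod_const]
    rw [Finset.card_erase_of_mem (Finset.mem_univ j), Finset.card_univ, Fintype.card_fin]
    rw [if_pos rfl]
    have hd : 1 ≤ d := Nat.one_le_iff_ne_zero.2 (by rintro rfl; exact j.elim0)
    have : (Real.sqrt π) ^ d = Real.sqrt π * (Real.sqrt π) ^ (d - 1) := by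
      conv_lhs => rw [← Nat.succ_pred_eq_of_pos hd]
      rw [pow_succ, Nat.pred_eq_sub_one]
      ring
    rw [this]; ring
  · rw [if_neg hjk]
    apply Finset.prod_eq_zero (Finset.mem_univ j)
    simp only [eq_self_iff_true, if_true, if_neg hjk, one_mul]
    exact g1_int
end Multi

section Quad
variable {d : ℕ}

lemma quad (M : Matrix (Fin d) (Fin d) ℝ) (c : Fin d → ℝ) :
    ∫ z : Fin d → ℝ, (∑ i, (M.mulVec z i + c i) ^ 2) * Real.exp (-∑ i, z i ^ 2)
      = (Real.sqrt π) ^ d * ((∑ i, ∑ j, M i j ^ 2) / 2 + ∑ i, c i ^ 2) := by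
  classical
  set E : (Fin d → ℝ) → ℝ := fun z => Real.exp (-∑ i, z i ^ 2) with hE
  have expand : ∀ (z : Fin d → ℝ) (i : Fin d), (M.mulVec z i + c i) ^ 2 * E z
      = (∑ j, ∑ k, (M i j * M i k) * (z j * z k * E z))
        + ((∑ j, (2 * c i * M i j) * (z j * E z)) + c i ^ 2 * E z) := by
    intro z i
    have hmv : M.mulVec z i = ∑ j, M i j * z j := by
      simp [Matrix.mulVec, dotProduct]
    rw [hmv]
    have h1 : (∑ j, M i j * z j) ^ 2 = ∑ j, ∑ k, (M i j * M i k) * (z j * z k) := by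
      rw [sq, Finset.sum_mul_sum]
      refine Finset.sum_congr rfl fun j _ => Finset.sum_congr rfl fun k _ => by ring
    have h2 : ((∑ j, M i j * z j) + c i) ^ 2
        = (∑ j, ∑ k, (M i j * M i k) * (z j * z k)) + ((∑ j, (2 * c i) * (M i j * z j)) + c i ^ 2) := by
      rw [add_sq, h1, Finset.mul_sum]
      ring_nf
      rw [Finset.sum_mul]
      ring_nf
      congr 1; refine Finset.sum_congr rfl fun j _ => by ring
    rw [h2, add_mul, add_mul, Finset.sum_mul, Finset.sum_mul]
    congr 1
    · refine Finset.sum_congr rfl fun j _ => ?_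
      rw [Finset.sum_mul]
      refine Finset.sum_congr rfl fun k _ => by ring
    · congr 1
      refine Finset.sum_congr rfl fun j _ => by ring
  have int_quad : ∀ i : Fin d, Integrable (fun z : Fin d → ℝ =>
      (∑ j, ∑ k, (M i j * M i k) * (z j * z k * E z))) :=
    fun i => integrable_finset_sum _ fun j _ => integrable_finset_sum _ fun k _ =>
      ((Int2 j k).const_mul _)
  have int_lin : ∀ i : Fin d, Integrable (fun z : Fin d → ℝ =>
      (∑ j, (2 * c i * M i j) * (z j * E z))) :=
    fun i => integrable_finset_sum _ fun j _ => ((Int1 j).const_mul _)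
  have int_const : ∀ i : Fin d, Integrable (fun z : Fin d → ℝ => c i ^ 2 * E z) :=
    fun i => Int0.const_mul _
  have I_i : ∀ i : Fin d, Integrable (fun z : Fin d → ℝ => (M.mulVec z i + c i) ^ 2 * E z) := by
    intro i
    exact (((int_quad i).add ((int_lin i).add (int_const i))).congr
      (Filter.Eventually.of_forall fun z => ((expand z i).symm)))
  have step1 : ∫ z : Fin d → ℝ, (∑ i, (M.mulVec z i + c i) ^ 2) * E z
      = ∑ i, ∫ z : Fin d → ℝ, (M.mulVec z i + c i) ^ 2 * E z := by
    rw [← integral_finset_sum _ (fun i _ => I_i i)]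
    congr 1; funext z; rw [Finset.sum_mul]
  rw [step1]
  have step2 : ∀ i : Fin d, ∫ z : Fin d → ℝ, (M.mulVec z i + c i) ^ 2 * E z
      = (∑ j, (M i j) ^ 2) * ((Real.sqrt π) ^ d / 2) + c i ^ 2 * (Real.sqrt π) ^ d := by
    intro i
    have : ∫ z : Fin d → ℝ, (M.mulVec z i + c i) ^ 2 * E z
        = ∫ z : Fin d → ℝ, ((∑ j, ∑ k, (M i j * M i k) * (z j * z k * E z))
            + ((∑ j, (2 * c i * M i j) * (z j * E z)) + c i ^ 2 * E z)) := by
      congr 1; funext z; exact expand z i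
    have h2 : Integrable (fun z : Fin d → ℝ =>
        (∑ j, (2 * c i * M i j) * (z j * E z)) + c i ^ 2 * E z) := (int_lin i).add (int_const i)
    have h1 : Integrable (fun z : Fin d → ℝ =>
        (∑ j, ∑ k, (M i j * M i k) * (z j * z k * E z))) := int_quad i
    rw [this, integral_add h1 h2, integral_add (int_lin i) (int_const i)]
    rw [integral_finset_sum _ (fun j _ => integrable_finset_sum _ fun k _ => ((Int2 j k).const_mul _)),
      integral_finset_sum _ (fun j _ => ((Int1 j).const_mul _))]
    simp_rw [integral_finset_sum _ (fun k _ => ((Int2 _ k).const_mul _)), integral_const_mul]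
    rw [P0]
    have hq : ∀ j : Fin d, ∑ k, (M i j * M i k) * ∫ z : Fin d → ℝ, z j * z k * E z
        = (M i j) ^ 2 * ((Real.sqrt π) ^ d / 2) := by
      intro j
      simp_rw [hE, P2, mul_ite, mul_zero, Finset.sum_ite_eq]
      simp [sq]
    simp_rw [hE] at hq
    simp_rw [hq, P1, mul_zero, Finset.sum_const_zero, zero_add]
    rw [← Finset.sum_mul]
  simp_rw [step2]
  rw [Finset.sum_add_distrib, ← Finset.sum_mul, ← Finset.sum_mul]
  have : ∑ i, ∑ j, M i j ^ 2 = ∑ i, (∑ j, M i j ^ 2) := rfl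
  ring

end Quad

/-- The density of the pushforward of the reference Gaussian `π^{−d/2}e^{−|z|²}` under the
affine map `z ↦ Az + b`: `ρ_{A,b}(x) = π^{−d/2}|det A|⁻¹ exp(−|A⁻¹(x−b)|²)`. -/
noncomputable def ρAb {d : ℕ} (A : Matrix (Fin d) (Fin d) ℝ) (b : Fin d → ℝ)
    (x : Fin d → ℝ) : ℝ :=
  Real.pi ^ (-(d : ℝ) / 2) * |A.det|⁻¹ * Real.exp (-∑ i, (A⁻¹.mulVec (x - b)) i ^ 2)

lemma fderiv_log_rho {d : ℕ} (A : Matrix (Fin d) (Fin d) ℝ) (hA : IsUnit A.det)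
    (b : Fin d → ℝ) (x : Fin d → ℝ) (i : Fin d) :
    fderiv ℝ (fun y => Real.log (ρAb A b y)) x (Pi.single i 1)
      = -(2 * ∑ j, (A⁻¹.mulVec (x - b)) j * A⁻¹ j i) := by
  classical
  have hdet : A.det ≠ 0 := hA.ne_zero
  have hc0 : (Real.pi ^ (-(d : ℝ) / 2) * |A.det|⁻¹) ≠ 0 := by
    apply mul_ne_zero
    · exact (Real.rpow_pos_of_pos Real.pi_pos _).ne'
    · simp [abs_eq_zero, hdet]
  have hlog : (fun y => Real.log (ρAb A b y))
      = fun y => Real.log (Real.pi ^ (-(d : ℝ) / 2) * |A.det|⁻¹)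
          + (-∑ j, (A⁻¹.mulVec (y - b)) j ^ 2) := by
    funext y
    rw [ρAb, Real.log_mul hc0 (Real.exp_ne_zero _), Real.log_exp]
  rw [hlog]
  set L : (Fin d → ℝ) →L[ℝ] (Fin d → ℝ) :=
    LinearMap.toContinuousLinearMap (Matrix.mulVecLin A⁻¹) with hLdef
  have hbase : ∀ j : Fin d, HasFDerivAt (fun y : Fin d → ℝ => A⁻¹.mulVec (y - b) j)
      ((ContinuousLinearMap.proj j).comp L) x := by
    intro j
    have h0 : HasFDerivAt (fun y : Fin d → ℝ => y - b)
        (ContinuousLinearMap.id ℝ (Fin d → ℝ)) x := (hasFDerivAt_id x).sub_const b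
    have h1 : HasFDerivAt (fun y : Fin d → ℝ => L (y - b))
        (L.comp (ContinuousLinearMap.id ℝ (Fin d → ℝ))) x := L.hasFDerivAt.comp x h0
    have h2 := (ContinuousLinearMap.proj (R := ℝ) (φ := fun _ : Fin d => ℝ)
      j).hasFDerivAt.comp x h1
    have hce : ((ContinuousLinearMap.proj (R := ℝ) (φ := fun _ : Fin d => ℝ) j).comp
        (L.comp (ContinuousLinearMap.id ℝ (Fin d → ℝ))))
        = (ContinuousLinearMap.proj j).comp L := by
      rw [ContinuousLinearMap.comp_id]
    rw [hce] at h2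
    exact h2
  have hsq : ∀ j : Fin d, HasFDerivAt (fun y : Fin d → ℝ => (A⁻¹.mulVec (y - b) j) ^ 2)
      ((2 * A⁻¹.mulVec (x - b) j) • ((ContinuousLinearMap.proj j).comp L)) x := by
    intro j
    have h := (hbase j).mul (hbase j)
    have heq : (fun y : Fin d → ℝ => (A⁻¹.mulVec (y - b) j) ^ 2)
        = fun y : Fin d → ℝ => (A⁻¹.mulVec (y - b) j) * (A⁻¹.mulVec (y - b) j) :=
      funext fun y => sq _
    rw [heq]
    exact h.congr_fderiv (by rw [two_mul, add_smul])
  have hsum : HasFDerivAt (fun y : Fin d → ℝ => ∑ j, (A⁻¹.mulVec (y - b) j) ^ 2)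
      (∑ j, (2 * A⁻¹.mulVec (x - b) j) • ((ContinuousLinearMap.proj j).comp L)) x :=
    HasFDerivAt.fun_sum fun j _ => hsq j
  have hfull : HasFDerivAt
      (fun y => Real.log (Real.pi ^ (-(d : ℝ) / 2) * |A.det|⁻¹)
          + (-∑ j, (A⁻¹.mulVec (y - b)) j ^ 2))
      (-(∑ j, (2 * A⁻¹.mulVec (x - b) j) • ((ContinuousLinearMap.proj j).comp L))) x :=
    hsum.neg.const_add _
  rw [hfull.fderiv]
  have hLs : ∀ j : Fin d, L (Pi.single i 1) j = A⁻¹ j i := by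
    intro j
    show (A⁻¹.mulVec (Pi.single i 1)) j = A⁻¹ j i
    rw [Matrix.mulVec_single]
    simp
  simp only [ContinuousLinearMap.neg_apply, ContinuousLinearMap.coe_sum',
    Finset.sum_apply, ContinuousLinearMap.coe_smul', Pi.smul_apply,
    ContinuousLinearMap.coe_comp', Function.comp_apply, ContinuousLinearMap.proj_apply,
    smul_eq_mul]
  rw [Finset.mul_sum]
  congr 1
  refine Finset.sum_congr rfl fun j _ => ?_
  rw [hLs j]
  ring


lemma cov {d : ℕ} (A : Matrix (Fin d) (Fin d) ℝ) (hdet : A.det ≠ 0) (b : Fin d → ℝ)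
    (f : (Fin d → ℝ) → ℝ) (hf : Continuous f) :
    ∫ x : Fin d → ℝ, f x = |A.det| * ∫ z : Fin d → ℝ, f (A.mulVec z + b) := by
  classical
  have h1 : ∫ x : Fin d → ℝ, f x = ∫ y : Fin d → ℝ, f (y + b) :=
    (integral_add_right_eq_self f b).symm
  have hg : Continuous fun y : Fin d → ℝ => f (y + b) :=
    hf.comp (continuous_id.add continuous_const)
  have hmap := Real.map_matrix_volume_pi_eq_smul_volume_pi (M := A) hdet
  have hmeas : AEMeasurable (⇑(Matrix.toLin' A)) (volume : Measure (Fin d → ℝ)) :=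
    ((Matrix.toLin' A).continuous_of_finiteDimensional).measurable.aemeasurable
  have h2 : ∫ y, f (y + b) ∂(Measure.map (⇑(Matrix.toLin' A)) volume)
      = ∫ z : Fin d → ℝ, f ((Matrix.toLin' A) z + b) :=
    integral_map hmeas hg.aestronglyMeasurable
  rw [hmap, integral_smul_measure, ENNReal.toReal_ofReal (abs_nonneg _)] at h2
  have h3 : ∫ z : Fin d → ℝ, f ((Matrix.toLin' A) z + b)
      = ∫ z : Fin d → ℝ, f (A.mulVec z + b) := by
    simp only [Matrix.toLin'_apply]
  rw [h3] at h2
  have hne : |A.det| ≠ 0 := by simpa [abs_eq_zero] using hdet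
  rw [h1, ← h2, smul_eq_mul, abs_inv]
  field_simp

/-- The total potential energy of the quantum harmonic oscillator at the pushed-forward
Gaussian density: `∫ (|x|²/2)ρ_{A,b} + (1/8)∫ |∇ log ρ_{A,b}|² ρ_{A,b}
= (1/4)Tr(AᵀA + (AAᵀ)⁻¹) + (1/2)bᵀb`. -/
theorem total_energy_pushforward_gaussian (d : ℕ) (hd : 1 ≤ d)
    (A : Matrix (Fin d) (Fin d) ℝ) (hA : IsUnit A.det) (b : Fin d → ℝ) :
    (∫ x : Fin d → ℝ, ((∑ i, x i ^ 2) / 2) * ρAb A b x)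
      + (1 / 8) * ∫ x : Fin d → ℝ,
          (∑ i, (fderiv ℝ (fun y => Real.log (ρAb A b y)) x (Pi.single i 1)) ^ 2) * ρAb A b x
      = (1 / 4) * (Aᵀ * A + (A * Aᵀ)⁻¹).trace + (1 / 2) * (b ⬝ᵥ b) := by
  classical
  have hdet : A.det ≠ 0 := hA.ne_zero
  set c0 : ℝ := Real.pi ^ (-(d : ℝ) / 2) * |A.det|⁻¹ with hc0def
  -- continuity facts
  have hw : Continuous fun x : Fin d → ℝ => A⁻¹.mulVec (x - b) := by
    have : Continuous fun x : Fin d → ℝ => (Matrix.mulVecLin A⁻¹) (x - b) :=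
      (Matrix.mulVecLin A⁻¹).continuous_of_finiteDimensional.comp
        (continuous_id.sub continuous_const)
    exact this
  have hρ : Continuous (ρAb A b) := by
    apply Continuous.mul continuous_const
    apply Real.continuous_exp.comp
    apply Continuous.neg
    apply continuous_finset_sum
    intro i _
    exact ((continuous_apply i).comp hw).pow 2
  -- rewrite the fderiv integrand
  have hI2 : (∫ x : Fin d → ℝ,
        (∑ i, (fderiv ℝ (fun y => Real.log (ρAb A b y)) x (Pi.single i 1)) ^ 2) * ρAb A b x)
      = ∫ x : Fin d → ℝ,
        (∑ i, (2 * ∑ j, (A⁻¹.mulVec (x - b)) j * A⁻¹ j i) ^ 2) * ρAb A b x := by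
    congr 1; funext x
    refine congrArg (· * ρAb A b x) ?_
    refine Finset.sum_congr rfl fun i _ => ?_
    rw [fderiv_log_rho A hA b x i, neg_sq]
  rw [hI2]
  -- change of variables in both integrals
  have hcont1 : Continuous fun x : Fin d → ℝ => ((∑ i, x i ^ 2) / 2) * ρAb A b x := by
    exact ((continuous_finset_sum _ fun i _ => (continuous_apply i).pow 2).div_const 2).mul hρ
  have hcont2 : Continuous fun x : Fin d → ℝ =>
      (∑ i, (2 * ∑ j, (A⁻¹.mulVec (x - b)) j * A⁻¹ j i) ^ 2) * ρAb A b x := by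
    refine Continuous.mul ?_ hρ
    apply continuous_finset_sum
    intro i _
    refine Continuous.pow ?_ 2
    exact continuous_const.mul (continuous_finset_sum _ fun j _ =>
      ((continuous_apply j).comp hw).mul continuous_const)
  rw [cov A hdet b _ hcont1, cov A hdet b _ hcont2]
  -- simplify composed integrands
  have hz : ∀ z : Fin d → ℝ, A⁻¹.mulVec (A.mulVec z + b - b) = z := by
    intro z
    rw [add_sub_cancel_right, Matrix.mulVec_mulVec, Matrix.nonsing_inv_mul A hA,
      Matrix.one_mulVec]
  have hρz : ∀ z : Fin d → ℝ, ρAb A b (A.mulVec z + b)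
      = c0 * Real.exp (-∑ i, z i ^ 2) := by
    intro z
    rw [ρAb, hz z]
  have hint1 : ∫ z : Fin d → ℝ, ((∑ i, (A.mulVec z + b) i ^ 2) / 2) * ρAb A b (A.mulVec z + b)
      = (c0 / 2) * ((Real.sqrt π) ^ d * ((∑ i, ∑ j, A i j ^ 2) / 2 + ∑ i, b i ^ 2)) := by
    have : ∀ z : Fin d → ℝ, ((∑ i, (A.mulVec z + b) i ^ 2) / 2) * ρAb A b (A.mulVec z + b)
        = (c0 / 2) * ((∑ i, (A.mulVec z i + b i) ^ 2) * Real.exp (-∑ i, z i ^ 2)) := by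
      intro z
      rw [hρz z]
      simp only [Pi.add_apply]
      ring
    simp_rw [this]
    rw [integral_const_mul, quad A b]
  have hint2 : ∫ z : Fin d → ℝ,
        (∑ i, (2 * ∑ j, (A⁻¹.mulVec (A.mulVec z + b - b)) j * A⁻¹ j i) ^ 2)
          * ρAb A b (A.mulVec z + b)
      = (4 * c0) * ((Real.sqrt π) ^ d * ((∑ i, ∑ j, (A⁻¹)ᵀ i j ^ 2) / 2 + ∑ _i : Fin d, (0:ℝ) ^ 2)) := by
    have : ∀ z : Fin d → ℝ,
        (∑ i, (2 * ∑ j, (A⁻¹.mulVec (A.mulVec z + b - b)) j * A⁻¹ j i) ^ 2)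
          * ρAb A b (A.mulVec z + b)
        = (4 * c0) * ((∑ i, ((A⁻¹)ᵀ.mulVec z i + (0:ℝ)) ^ 2) * Real.exp (-∑ i, z i ^ 2)) := by
      intro z
      rw [hρz z, hz z]
      have hsum : ∀ i : Fin d, (2 * ∑ j, z j * A⁻¹ j i) ^ 2
          = 4 * ((A⁻¹)ᵀ.mulVec z i + 0) ^ 2 := by
        intro i
        have : (A⁻¹)ᵀ.mulVec z i = ∑ j, z j * A⁻¹ j i := by
          simp [Matrix.mulVec, dotProduct, Matrix.transpose_apply, mul_comm]
        rw [this]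
        ring
      simp_rw [hsum]
      rw [← Finset.mul_sum]
      ring
    simp_rw [this]
    rw [integral_const_mul, quad ((A⁻¹)ᵀ) (fun _ => (0:ℝ))]
  rw [hint1, hint2]
  -- normalization
  have hS : (Real.sqrt π) ^ d = Real.pi ^ ((d : ℝ) / 2) := by
    rw [← Real.rpow_natCast (Real.sqrt Real.pi) d, Real.sqrt_eq_rpow, ← Real.rpow_mul
      Real.pi_pos.le]
    congr 1
    ring
  have hnorm : |A.det| * (c0 * (Real.sqrt π) ^ d) = 1 := by
    rw [hS, hc0def]
    have : Real.pi ^ (-(d : ℝ) / 2) * Real.pi ^ ((d : ℝ) / 2) = 1 := by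
      rw [← Real.rpow_add Real.pi_pos, show -(d : ℝ) / 2 + (d : ℝ) / 2 = 0 by ring,
        Real.rpow_zero]
    have hne : |A.det| ≠ 0 := by simpa [abs_eq_zero] using hdet
    field_simp
    rw [neg_div] at this
    linarith [this]
  -- RHS trace computations
  have htr1 : (Aᵀ * A).trace = ∑ i, ∑ j, A i j ^ 2 := by
    rw [Matrix.trace]
    simp_rw [Matrix.diag_apply, Matrix.mul_apply, Matrix.transpose_apply, sq]
    rw [Finset.sum_comm]
  have htr2 : ((A * Aᵀ)⁻¹).trace = ∑ i, ∑ j, (A⁻¹)ᵀ i j ^ 2 := by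
    rw [Matrix.mul_inv_rev, Matrix.trace]
    refine Finset.sum_congr rfl fun i _ => ?_
    rw [Matrix.diag_apply, Matrix.mul_apply]
    refine Finset.sum_congr rfl fun j _ => ?_
    rw [← Matrix.transpose_nonsing_inv]
    simp [Matrix.transpose_apply, sq]
  have hb : b ⬝ᵥ b = ∑ i, b i ^ 2 := by
    simp [dotProduct, sq]
  rw [Matrix.trace_add, htr1, htr2, hb]
  have h00 : (∑ _i : Fin d, (0:ℝ) ^ 2) = 0 := by simp
  rw [h00, add_zero]
  set S := (Real.sqrt π) ^ d
  set Q1 := ∑ i, ∑ j, A i j ^ 2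
  set Q2 := ∑ i, ∑ j, (A⁻¹)ᵀ i j ^ 2
  set bb := ∑ i, b i ^ 2
  linear_combination (Q1 / 4 + bb / 2 + Q2 / 4) * hnorm
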